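/- Let n ≥ 2 be an integer, α ∈ [0,1), c̃ > 0, λ := arccosh((1 + c̃⁻¹)/(1 − α)), and let B be the (n−1)×(n−1) tridiagonal matrix with diagonal entries 1 + c̃⁻¹ and off-diagonal entries −(1−α)/2. Let b := B⁻¹𝟙, where 𝟙 ∈ ℝ^{n−1} is the all-ones vector, with the convention b_0 = b_n = 0. Then for every 1 ≤ j ≤ n, ((1−α)/2)·(b_j − b_{j−1}) = sinh((((n+1)/2) − j)λ) / (sinh(((n+1)/2)λ) − sinh(((n−1)/2)λ)). -/

import Mathlib

open Real Matrix Finset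

noncomputable section

/-- Real inverse hyperbolic cosine. -/
def arcosh (x : ℝ) : ℝ := Real.log (x + Real.sqrt (x ^ 2 - 1))

/-- The regularized reduced kernel matrix: tridiagonal with diagonal `1 + c̃⁻¹`
and off-diagonal `−(1−α)/2`. -/
def Bmat (n : ℕ) (α ctil : ℝ) : Matrix (Fin (n - 1)) (Fin (n - 1)) ℝ :=
  fun i j =>
    if i = j then 1 + ctil⁻¹
    else if (i : ℕ) + 1 = (j : ℕ) ∨ (j : ℕ) + 1 = (i : ℕ) then -((1 - α) / 2)
    else 0

/-- Entry `j` (1-based) of `b := B⁻¹𝟙`, with the convention `b₀ = bₙ = 0`. -/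
def bAt (n : ℕ) (α ctil : ℝ) (j : ℕ) : ℝ :=
  if h : 1 ≤ j ∧ j ≤ n - 1 then
    ((Bmat n α ctil)⁻¹ *ᵥ fun _ => (1 : ℝ)) ⟨j - 1, by omega⟩
  else 0

lemma cosh_arcosh {x : ℝ} (hx : 1 ≤ x) : Real.cosh (_root_.arcosh x) = x := by
  have h1 : (0:ℝ) ≤ x ^ 2 - 1 := by nlinarith
  have hs : Real.sqrt (x ^ 2 - 1) ^ 2 = x ^ 2 - 1 := Real.sq_sqrt h1
  have hs0 : 0 ≤ Real.sqrt (x ^ 2 - 1) := Real.sqrt_nonneg _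
  have hy : 0 < x + Real.sqrt (x ^ 2 - 1) := by nlinarith
  rw [_root_.arcosh, Real.cosh_eq, Real.exp_neg, Real.exp_log hy]
  field_simp
  nlinarith [hs]

lemma arcosh_pos {x : ℝ} (hx : 1 < x) : 0 < _root_.arcosh x :=
  Real.log_pos (by have := Real.sqrt_nonneg (x^2-1); linarith)

def fAux (n : ℕ) (α lam : ℝ) (t : ℝ) : ℝ :=
  (1 - Real.cosh ((t - (n:ℝ)/2) * lam) / Real.cosh ((n:ℝ) * lam / 2)) /
    (2 * ((1 - α)/2) * (Real.cosh lam - 1))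

lemma fAux_zero (n : ℕ) (α lam : ℝ) : fAux n α lam 0 = 0 := by
  unfold fAux
  rw [show ((0:ℝ) - (n:ℝ)/2) * lam = -((n:ℝ) * lam / 2) by ring, Real.cosh_neg,
    div_self (Real.cosh_pos _).ne', sub_self, zero_div]

lemma fAux_n (n : ℕ) (α lam : ℝ) : fAux n α lam (n:ℝ) = 0 := by
  unfold fAux
  rw [show ((n:ℝ) - (n:ℝ)/2) * lam = (n:ℝ) * lam / 2 by ring,
    div_self (Real.cosh_pos _).ne', sub_self, zero_div]

lemma fAux_rec (n : ℕ) (α lam : ℝ) (hα1 : α < 1) (hlam : 0 < lam) (t : ℝ) :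
    (2 * ((1 - α)/2) * Real.cosh lam) * fAux n α lam t
      - ((1 - α)/2) * fAux n α lam (t - 1) - ((1 - α)/2) * fAux n α lam (t + 1) = 1 := by
  have h1 : (t - 1 - (n:ℝ)/2) * lam = (t - (n:ℝ)/2) * lam - lam := by ring
  have h2 : (t + 1 - (n:ℝ)/2) * lam = (t - (n:ℝ)/2) * lam + lam := by ring
  unfold fAux
  rw [h1, h2, Real.cosh_sub, Real.cosh_add]
  have hc1 : Real.cosh lam - 1 ≠ 0 :=
    sub_ne_zero.mpr (Real.one_lt_cosh.mpr hlam.ne').ne'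
  have hE : Real.cosh ((n:ℝ) * lam / 2) ≠ 0 := (Real.cosh_pos _).ne'
  have hα : (1:ℝ) - α ≠ 0 := by linarith
  field_simp
  ring

lemma key_identity (n : ℕ) (α lam t : ℝ) (hα1 : α < 1) (hlam : 0 < lam) :
    ((1 - α)/2) * (fAux n α lam t - fAux n α lam (t - 1)) =
      Real.sinh ((((n:ℝ) + 1) / 2 - t) * lam) /
        (Real.sinh (((n:ℝ) + 1) / 2 * lam) - Real.sinh (((n:ℝ) - 1) / 2 * lam)) := by
  have hs : 0 < Real.sinh (lam/2) := Real.sinh_pos_iff.mpr (by linarith)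
  have hE : 0 < Real.cosh ((n:ℝ) * lam / 2) := Real.cosh_pos _
  have hα : (1:ℝ) - α ≠ 0 := by linarith
  have hden : Real.sinh (((n:ℝ) + 1) / 2 * lam) - Real.sinh (((n:ℝ) - 1) / 2 * lam)
      = 2 * Real.cosh ((n:ℝ) * lam / 2) * Real.sinh (lam/2) := by
    rw [show ((n:ℝ) + 1) / 2 * lam = (n:ℝ) * lam / 2 + lam/2 by ring,
      show ((n:ℝ) - 1) / 2 * lam = (n:ℝ) * lam / 2 - lam/2 by ring,
      Real.sinh_add, Real.sinh_sub]
    ring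
  have hcl : Real.cosh lam - 1 = 2 * Real.sinh (lam/2) ^ 2 := by
    have h := Real.cosh_add (lam/2) (lam/2)
    rw [show lam/2 + lam/2 = lam by ring] at h
    rw [h]
    linear_combination Real.cosh_sq (lam/2)
  have hstep1 : Real.cosh ((t - 1 - (n:ℝ)/2) * lam)
      = Real.cosh ((t - (n:ℝ)/2) * lam)
        + 2 * Real.sinh ((((n:ℝ) + 1) / 2 - t) * lam) * Real.sinh (lam/2) := by
    rw [show (t - 1 - (n:ℝ)/2) * lam = -(((((n:ℝ) + 1) / 2 - t) * lam) + lam/2) by ring,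
      show (t - (n:ℝ)/2) * lam = -(((((n:ℝ) + 1) / 2 - t) * lam) - lam/2) by ring,
      Real.cosh_neg, Real.cosh_neg, Real.cosh_add, Real.cosh_sub]
    ring
  unfold fAux
  rw [hstep1, hden, hcl]
  field_simp
  ring

lemma sum_ite_le {m : ℕ} (s : Finset (Fin m)) (P : Fin m → Prop) [DecidablePred P]
    (c : ℝ) (hc : 0 ≤ c) (hP : ∀ j j', P j → P j' → j = j') :
    ∑ j ∈ s, (if P j then c else 0) ≤ c := by
  rw [← Finset.sum_filter, Finset.sum_const, nsmul_eq_mul]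
  have h1 : ((s.filter P).card : ℝ) ≤ 1 := by
    exact_mod_cast Finset.card_le_one.mpr
      (fun a ha b hb => hP a b (Finset.mem_filter.mp ha).2 (Finset.mem_filter.mp hb).2)
  nlinarith

lemma Bmat_det_ne_zero (n : ℕ) (α ctil : ℝ) (hα0 : 0 ≤ α) (hα1 : α < 1) (hc : 0 < ctil) :
    (Bmat n α ctil).det ≠ 0 := by
  apply det_ne_zero_of_sum_row_lt_diag
  intro k
  have hq : (0:ℝ) ≤ (1 - α)/2 := by linarith
  have hct : (0:ℝ) < ctil⁻¹ := inv_pos.mpr hc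
  have hdiag : ‖Bmat n α ctil k k‖ = 1 + ctil⁻¹ := by
    have h1 : Bmat n α ctil k k = 1 + ctil⁻¹ := if_pos rfl
    rw [h1, Real.norm_eq_abs, abs_of_pos (by linarith)]
  rw [hdiag]
  have hbound : ∀ j ∈ Finset.univ.erase k, ‖Bmat n α ctil k j‖ ≤
      (if (j:ℕ) = (k:ℕ) + 1 then (1 - α)/2 else 0)
      + (if (j:ℕ) + 1 = (k:ℕ) then (1 - α)/2 else 0) := by
    intro j hj
    have hjk : j ≠ k := (Finset.mem_erase.mp hj).1
    have hjk' : (j:ℕ) ≠ (k:ℕ) := fun h => hjk (Fin.ext h)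
    have h0 : Bmat n α ctil k j =
        if (k:ℕ) + 1 = (j:ℕ) ∨ (j:ℕ) + 1 = (k:ℕ) then -((1 - α) / 2) else 0 :=
      if_neg (fun h => hjk' (congrArg Fin.val h).symm)
    rw [h0, Real.norm_eq_abs]
    by_cases h : (k:ℕ) + 1 = (j:ℕ) ∨ (j:ℕ) + 1 = (k:ℕ)
    · rw [if_pos h, abs_neg, abs_of_nonneg hq]
      rcases h with h | h
      · rw [if_pos (by omega), if_neg (by omega)]; linarith
      · rw [if_neg (by omega), if_pos (by omega)]; linarith
    · rw [if_neg h, abs_zero]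
      have h1 : ¬((j:ℕ) = (k:ℕ) + 1) := by omega
      have h2 : ¬((j:ℕ) + 1 = (k:ℕ)) := by omega
      rw [if_neg h1, if_neg h2]; linarith
  calc ∑ j ∈ Finset.univ.erase k, ‖Bmat n α ctil k j‖
      ≤ ∑ j ∈ Finset.univ.erase k,
        ((if (j:ℕ) = (k:ℕ) + 1 then (1 - α)/2 else 0)
          + (if (j:ℕ) + 1 = (k:ℕ) then (1 - α)/2 else 0)) := Finset.sum_le_sum hbound
    _ ≤ (1 - α)/2 + (1 - α)/2 := by
        rw [Finset.sum_add_distrib]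
        refine add_le_add ?_ ?_
        · exact sum_ite_le _ _ _ hq (fun a b ha hb => Fin.ext (by omega))
        · exact sum_ite_le _ _ _ hq (fun a b ha hb => Fin.ext (by omega))
    _ < 1 + ctil⁻¹ := by linarith

lemma Bmat_mulVec (n : ℕ) (hn : 2 ≤ n) (α ctil lam : ℝ) (hα1 : α < 1) (hlam : 0 < lam)
    (hd : 1 + ctil⁻¹ = 2 * ((1 - α)/2) * Real.cosh lam) :
    Bmat n α ctil *ᵥ (fun i : Fin (n-1) => fAux n α lam ((i:ℕ) + 1)) = fun _ => (1:ℝ) := by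
  funext i
  simp only [Matrix.mulVec, dotProduct]
  have hsplit : ∀ j : Fin (n-1), Bmat n α ctil i j * fAux n α lam ((j:ℕ) + 1) =
      (if j = i then (1 + ctil⁻¹) * fAux n α lam ((j:ℕ) + 1) else 0)
      + (if (j:ℕ) = (i:ℕ) + 1 then (-((1 - α)/2)) * fAux n α lam ((j:ℕ) + 1) else 0)
      + (if (j:ℕ) + 1 = (i:ℕ) then (-((1 - α)/2)) * fAux n α lam ((j:ℕ) + 1) else 0) := by
    intro j
    simp only [Bmat, Fin.ext_iff]
    split_ifs
    all_goals first
    | ring1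
    | (exfalso; omega)
  rw [Finset.sum_congr rfl (fun j _ => hsplit j), Finset.sum_add_distrib,
    Finset.sum_add_distrib]
  have hS1 : ∑ j : Fin (n-1), (if j = i then (1 + ctil⁻¹) * fAux n α lam ((j:ℕ) + 1) else 0)
      = (1 + ctil⁻¹) * fAux n α lam ((i:ℕ) + 1) := by
    rw [Finset.sum_ite_eq' Finset.univ i]
    simp
  have hS2 : ∑ j : Fin (n-1),
      (if (j:ℕ) = (i:ℕ) + 1 then (-((1 - α)/2)) * fAux n α lam ((j:ℕ) + 1) else 0)
      = (-((1 - α)/2)) * fAux n α lam (((i:ℕ):ℝ) + 2) := by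
    by_cases hp : (i:ℕ) + 1 < n - 1
    · rw [Finset.sum_eq_single (⟨(i:ℕ) + 1, hp⟩ : Fin (n-1))]
      · rw [if_pos rfl]
        have e : ((((i:ℕ) + 1 : ℕ)):ℝ) + 1 = ((i:ℕ):ℝ) + 2 := by push_cast; ring
        rw [e]
      · exact fun b _ hb => if_neg (fun hbv => hb (Fin.ext hbv))
      · simp
    · have hi2 : (i:ℕ) + 2 = n := by have := i.isLt; omega
      have hz : fAux n α lam (((i:ℕ):ℝ) + 2) = 0 := by
        have e : ((i:ℕ):ℝ) + 2 = (n:ℝ) := by exact_mod_cast congrArg (Nat.cast : ℕ → ℝ) hi2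
        rw [e]; exact fAux_n n α lam
      rw [hz, mul_zero]
      exact Finset.sum_eq_zero fun j _ => if_neg (by have := j.isLt; omega)
  have hS3 : ∑ j : Fin (n-1),
      (if (j:ℕ) + 1 = (i:ℕ) then (-((1 - α)/2)) * fAux n α lam ((j:ℕ) + 1) else 0)
      = (-((1 - α)/2)) * fAux n α lam ((i:ℕ):ℝ) := by
    by_cases hp : 1 ≤ (i:ℕ)
    · have hlt : (i:ℕ) - 1 < n - 1 := by have := i.isLt; omega
      rw [Finset.sum_eq_single (⟨(i:ℕ) - 1, hlt⟩ : Fin (n-1))]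
      · rw [if_pos (by simp; omega)]
        have hnat : ((i:ℕ) - 1) + 1 = (i:ℕ) := by omega
        have e : ((((i:ℕ) - 1 : ℕ)):ℝ) + 1 = ((i:ℕ):ℝ) := by
          exact_mod_cast congrArg (Nat.cast : ℕ → ℝ) hnat
        rw [e]
      · exact fun b _ hb => if_neg (fun hbv => hb (Fin.ext (show (b:ℕ) = (i:ℕ) - 1 by omega)))
      · simp
    · have hz : fAux n α lam ((i:ℕ):ℝ) = 0 := by
        have hi0 : (i:ℕ) = 0 := by omega
        rw [hi0]
        exact_mod_cast fAux_zero n α lam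
      rw [hz, mul_zero]
      exact Finset.sum_eq_zero fun j _ => if_neg (by omega)
  rw [hS1, hS2, hS3]
  have hrec := fAux_rec n α lam hα1 hlam (((i:ℕ):ℝ) + 1)
  rw [show ((i:ℕ):ℝ) + 1 - 1 = ((i:ℕ):ℝ) by ring,
    show ((i:ℕ):ℝ) + 1 + 1 = ((i:ℕ):ℝ) + 2 by ring] at hrec
  rw [hd]
  linarith


/-- The emergent TI rank: the discrete derivative of `B⁻¹𝟙`, in closed form. -/
theorem ti_rank_closed_form
    (n : ℕ) (hn : 2 ≤ n) (α ctil : ℝ) (hα0 : 0 ≤ α) (hα1 : α < 1) (hc : 0 < ctil) :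
    ∀ j : ℕ, 1 ≤ j → j ≤ n →
      ((1 - α) / 2) * (bAt n α ctil j - bAt n α ctil (j - 1)) =
        Real.sinh ((((n : ℝ) + 1) / 2 - (j : ℝ)) * _root_.arcosh ((1 + ctil⁻¹) / (1 - α))) /
          (Real.sinh (((n : ℝ) + 1) / 2 * _root_.arcosh ((1 + ctil⁻¹) / (1 - α))) -
            Real.sinh (((n : ℝ) - 1) / 2 * _root_.arcosh ((1 + ctil⁻¹) / (1 - α)))) := by
  intro j hj1 hjn
  have hα : (0:ℝ) < 1 - α := by linarith
  have hct : (0:ℝ) < ctil⁻¹ := inv_pos.mpr hc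
  have hxgt : 1 < (1 + ctil⁻¹) / (1 - α) := by
    rw [lt_div_iff₀ hα]; nlinarith
  set lam := _root_.arcosh ((1 + ctil⁻¹) / (1 - α)) with hlamdef
  have hcosh : Real.cosh lam = (1 + ctil⁻¹) / (1 - α) := _root_.cosh_arcosh hxgt.le
  have hlam : 0 < lam := _root_.arcosh_pos hxgt
  have hd : 1 + ctil⁻¹ = 2 * ((1 - α)/2) * Real.cosh lam := by
    rw [hcosh]; field_simp
  have hBv := Bmat_mulVec n hn α ctil lam hα1 hlam hd
  have hdet := Bmat_det_ne_zero n α ctil hα0 hα1 hc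
  have hv : (Bmat n α ctil)⁻¹ *ᵥ (fun _ => (1:ℝ))
      = fun i : Fin (n-1) => fAux n α lam ((i:ℕ) + 1) := by
    rw [← hBv, Matrix.mulVec_mulVec,
      Matrix.nonsing_inv_mul _ (isUnit_iff_ne_zero.mpr hdet), Matrix.one_mulVec]
  have hbAt : ∀ k : ℕ, k ≤ n → bAt n α ctil k = fAux n α lam (k:ℝ) := by
    intro k hk
    unfold bAt
    split_ifs with h
    · rw [hv]
      have e : (((k - 1 : ℕ)):ℝ) + 1 = (k:ℝ) := by
        have : (k - 1) + 1 = k := by omega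
        exact_mod_cast congrArg (Nat.cast : ℕ → ℝ) this
      simp only []
      rw [e]
    · have : k = 0 ∨ k = n := by omega
      rcases this with h0 | h0
      · rw [h0]; exact_mod_cast (fAux_zero n α lam).symm
      · rw [h0]; exact (fAux_n n α lam).symm
  rw [hbAt j hjn, hbAt (j - 1) (by omega)]
  have e : (((j - 1 : ℕ)):ℝ) = (j:ℝ) - 1 := by
    push_cast [Nat.cast_sub hj1]
    ring
  rw [e]
  exact key_identity n α lam (j:ℝ) hα1 hlam
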